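/- For fixed N ≥ 2, k = N/2 (N even), and fixed ratio r = m_sep/m ∈ (0,1], the inequality m_sep(d^N + 1) ≤ m(d^{N/2} + 1) fails for all sufficiently large local dimensions d; precisely, it holds iff r(d^N + 1) ≤ d^{N/2} + 1, and there exists d_max such that it fails for all d > d_max. -/

import Mathlib

open Matrix BigOperators Finset Kronecker
open scoped ComplexOrder

noncomputable section

/-- The rank-one projector `|v⟩⟨v|`. -/
def proj {n : Type*} [Fintype n] (v : n → ℂ) : Matrix n n ℂ :=
  Matrix.of fun a b => v a * star (v b)

/-- The inner product `⟨v|w⟩` on `n → ℂ`. -/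
def inner' {n : Type*} [Fintype n] (v w : n → ℂ) : ℂ := ∑ i, star (v i) * w i

/-- A density matrix: positive semidefinite with unit trace. -/
def IsDensity {n : Type*} [Fintype n] [DecidableEq n] (ρ : Matrix n n ℂ) : Prop :=
  ρ.PosSemidef ∧ ρ.trace = 1


/-- Corollary 2: for fixed even `N ≥ 2`, `k = N/2` and a fixed fraction `r = m_sep/m` of
separable elements, the bound `m_sep(d^N+1) ≤ m(d^{N/2}+1)` holds iff `r(d^N+1) ≤ d^{N/2}+1`,
and it fails for all sufficiently large local dimensions `d`. -/
theorem stmt_17 (N : ℕ) (hN : 2 ≤ N) (hNe : Even N) (r : ℝ) (hr0 : 0 < r) (hr1 : r ≤ 1) :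
    (∀ (d m : ℕ), 0 < m → ∀ msep : ℝ, msep = r * m →
      ((msep * ((d : ℝ)^N + 1) ≤ (m : ℝ) * ((d : ℝ)^(N/2) + 1)) ↔
        r * ((d : ℝ)^N + 1) ≤ (d : ℝ)^(N/2) + 1))
    ∧ ∃ dmax : ℕ, ∀ d : ℕ, dmax < d → ¬ (r * ((d : ℝ)^N + 1) ≤ (d : ℝ)^(N/2) + 1) := by
  constructor
  · intro d m hm msep hmsep
    have hm' : (0:ℝ) < m := by exact_mod_cast hm
    subst hmsep
    constructor
    · intro h
      have h2 : (m:ℝ) * (r * ((d:ℝ)^N + 1)) ≤ (m:ℝ) * ((d:ℝ)^(N/2) + 1) := by linarith [h]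
      exact (mul_le_mul_iff_right₀ hm').mp h2
    · intro h
      have := (mul_le_mul_iff_right₀ hm').mpr h
      linarith [this]
  · refine ⟨⌈2 / r⌉₊ + 1, fun d hd h => ?_⟩
    have hd2 : 2 ≤ d := by
      have h1 : 1 ≤ ⌈2 / r⌉₊ := Nat.one_le_ceil_iff.mpr (by positivity)
      omega
    have hdr : 2 < r * d := by
      have h1 : (⌈2 / r⌉₊ : ℝ) < d := by
        have : ⌈2 / r⌉₊ < d := by omega
        exact_mod_cast this
      have h2 : 2 / r ≤ (⌈2 / r⌉₊ : ℝ) := Nat.le_ceil _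
      have h3 : 2 / r < d := lt_of_le_of_lt h2 h1
      have := mul_lt_mul_of_pos_left h3 hr0
      rwa [mul_div_cancel₀ _ hr0.ne'] at this
    set x : ℝ := (d : ℝ) ^ (N / 2) with hx
    have hd1 : (1:ℝ) ≤ (d:ℝ) := by exact_mod_cast (by omega : 1 ≤ d)
    have hxd : (d : ℝ) ≤ x := by
      have h1 : 1 ≤ N / 2 := by omega
      calc (d : ℝ) = (d:ℝ)^1 := (pow_one _).symm
        _ ≤ x := pow_le_pow_right₀ hd1 h1
    have hx1 : (1:ℝ) ≤ x := le_trans hd1 hxd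
    have hdN : (d : ℝ) ^ N = x ^ 2 := by
      rw [hx, ← pow_mul]
      congr 1
      obtain ⟨t, ht⟩ := hNe
      omega
    rw [hdN] at h
    nlinarith [mul_le_mul_of_nonneg_left (mul_le_mul_of_nonneg_right hxd (by linarith : (0:ℝ) ≤ x)) hr0.le, mul_lt_mul_of_pos_right hdr (by linarith : (0:ℝ) < x)]
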